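/- In a simple online cooperative game (0-1 valued monotone valuation with v(N) = 1), the ULMES rule satisfies incentive for early arrival: for any player i, fixing the relative arrival order of all other players, delaying i's arrival never strictly increases i's total share. -/

import Mathlib

variable {α : Type*} [DecidableEq α]

open Classical in
/-- ULMES backward-elimination scan: given the full arrived set value `v full`, the new
arrival `a`, and the arrived players listed from latest to earliest, remove a scanned
player `q` from the tentative set `S` whenever `v ((S \ {q}) ∪ {a}) = v full`. -/
noncomputable def ulmesScan (v : Finset α → ℝ) (full : Finset α) (a : α) :
    List α → Finset α → Finset α
  | [], S => S
  | q :: rest, S =>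
      if v (insert a (S.erase q)) = v full then ulmesScan v full a rest (S.erase q)
      else ulmesScan v full a rest S

/-- The surviving sharing set at the `t`-th arrival (0-indexed) under arrival order `L`. -/
noncomputable def ulmesSetL [Inhabited α] (v : Finset α → ℝ) (L : List α) (t : ℕ) : Finset α :=
  ulmesScan v (L.take (t + 1)).toFinset (L.getD t default)
    (L.take (t + 1)).reverse (L.take (t + 1)).toFinset

/-- Amount ULMES gives player `p` at the `t`-th arrival: the marginal contribution of
the new arrival is split equally among the surviving sharing set. -/
noncomputable def ulmesStepL [Inhabited α] (v : Finset α → ℝ) (L : List α) (t : ℕ) (p : α) : ℝ :=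
  if p ∈ ulmesSetL v L t then
    (v (L.take (t + 1)).toFinset - v ((L.take (t + 1)).toFinset.erase (L.getD t default))) /
      ((ulmesSetL v L t).card : ℝ)
  else 0

/-- Total ULMES share of player `p` under arrival order `L`. -/
noncomputable def ulmesTotalL [Inhabited α] (v : Finset α → ℝ) (L : List α) (p : α) : ℝ :=
  ∑ t ∈ Finset.range L.length, ulmesStepL v L t p

/-! ### Auxiliary lemmas -/

lemma ulmesScan_subset (v : Finset α → ℝ) (full : Finset α) (a : α) :
    ∀ (l : List α) (S : Finset α), ulmesScan v full a l S ⊆ S := by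
  intro l
  induction l with
  | nil => intro S; simp [ulmesScan]
  | cons q rest ih =>
      intro S
      rw [ulmesScan]
      split
      · exact (ih _).trans (Finset.erase_subset _ _)
      · exact ih _

lemma cond_mono {v : Finset α → ℝ} (h01 : ∀ S : Finset α, v S = 0 ∨ v S = 1)
    (hmono : ∀ S T : Finset α, S ⊆ T → v S ≤ v T)
    {full : Finset α} (hF : v full = 1) {a q : α} {S S' : Finset α} (hss : S' ⊆ S)
    (h : v (insert a (S'.erase q)) = v full) :
    v (insert a (S.erase q)) = v full := by
  have hsub : insert a (S'.erase q) ⊆ insert a (S.erase q) :=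
    Finset.insert_subset_insert a (Finset.erase_subset_erase q hss)
  have h1 := hmono _ _ hsub
  rcases h01 (insert a (S.erase q)) with h2 | h2 <;> rw [hF] at * <;> linarith

lemma ulmesScan_skip {v : Finset α → ℝ} (h01 : ∀ S : Finset α, v S = 0 ∨ v S = 1)
    (hmono : ∀ S T : Finset α, S ⊆ T → v S ≤ v T)
    {full : Finset α} (hF : v full = 1) {a i : α} {S₀ : Finset α}
    (hni : ¬ v (insert a (S₀.erase i)) = v full) :
    ∀ (l₁ l₂ : List α) (S : Finset α), S ⊆ S₀ → i ∉ l₁ →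
      ulmesScan v full a (l₁ ++ i :: l₂) S = ulmesScan v full a (l₁ ++ l₂) S := by
  intro l₁
  induction l₁ with
  | nil =>
      intro l₂ S hS _
      simp only [List.nil_append]
      rw [ulmesScan, if_neg (fun h => hni (cond_mono h01 hmono hF hS h))]
  | cons q rest ih =>
      intro l₂ S hS hq
      simp only [List.cons_append]
      rw [ulmesScan, ulmesScan]
      split
      · exact ih l₂ _ ((Finset.erase_subset _ _).trans hS) (fun h => hq (List.mem_cons_of_mem _ h))
      · exact ih l₂ _ hS (fun h => hq (List.mem_cons_of_mem _ h))

lemma ulmesScan_swap {v : Finset α → ℝ} (h01 : ∀ S : Finset α, v S = 0 ∨ v S = 1)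
    (hmono : ∀ S T : Finset α, S ⊆ T → v S ≤ v T)
    {full : Finset α} (hF : v full = 1) {a i : α} :
    ∀ (l₀ l₁ l₂ : List α) (S : Finset α), i ∉ l₁ →
      i ∈ ulmesScan v full a (l₀ ++ i :: (l₁ ++ l₂)) S →
      ulmesScan v full a (l₀ ++ i :: (l₁ ++ l₂)) S
        = ulmesScan v full a ((l₀ ++ l₁) ++ i :: l₂) S := by
  intro l₀
  induction l₀ with
  | nil =>
      intro l₁ l₂ S hi hmem
      simp only [List.nil_append] at *
      by_cases hc : v (insert a (S.erase i)) = v full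
      · exfalso
        rw [ulmesScan, if_pos hc] at hmem
        exact (Finset.notMem_erase i S) (ulmesScan_subset v full a _ _ hmem)
      · rw [ulmesScan, if_neg hc]
        rw [ulmesScan_skip h01 hmono hF hc l₁ l₂ S (subset_refl S) hi]
  | cons q rest ihr =>
      intro l₁ l₂ S hi hmem
      simp only [List.cons_append] at *
      rw [ulmesScan] at hmem ⊢
      rw [show ulmesScan v full a (q :: (rest ++ l₁ ++ i :: l₂)) S = if v (insert a (S.erase q)) = v full then ulmesScan v full a (rest ++ l₁ ++ i :: l₂) (S.erase q) else ulmesScan v full a (rest ++ l₁ ++ i :: l₂) S from rfl]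
      split at hmem <;> rename_i hc
      · simp only [if_pos hc]
        exact ihr l₁ l₂ _ hi hmem
      · simp only [if_neg hc]
        exact ihr l₁ l₂ _ hi hmem

lemma take_toFinset_subset (L : List α) {n m : ℕ} (h : n ≤ m) :
    (L.take n).toFinset ⊆ (L.take m).toFinset := by
  intro x hx
  rw [List.mem_toFinset] at *
  have : L.take n = (L.take m).take n := by rw [List.take_take, min_eq_left h]
  rw [this] at hx
  exact List.take_subset _ _ hx

lemma ulmesStepL_nonneg [Inhabited α] {v : Finset α → ℝ}
    (hmono : ∀ S T : Finset α, S ⊆ T → v S ≤ v T) (L : List α) (t : ℕ) (x : α) :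
    0 ≤ ulmesStepL v L t x := by
  unfold ulmesStepL
  split
  · exact div_nonneg (sub_nonneg.2 (hmono _ _ (Finset.erase_subset _ _))) (Nat.cast_nonneg _)
  · exact le_refl 0

lemma ulmesStepL_off_pivot [Inhabited α] {v : Finset α → ℝ}
    (h01 : ∀ S : Finset α, v S = 0 ∨ v S = 1)
    (hmono : ∀ S T : Finset α, S ⊆ T → v S ≤ v T)
    {L : List α} (hL : L.Nodup) {p t : ℕ} (ht : t < L.length)
    (hp1 : v ((L.take (p+1)).toFinset) = 1)
    (hmin : ∀ s, s < p → v ((L.take (s+1)).toFinset) ≠ 1)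
    (hne : t ≠ p) (x : α) : ulmesStepL v L t x = 0 := by
  have key : v (L.take (t + 1)).toFinset
      - v ((L.take (t + 1)).toFinset.erase (L.getD t default)) = 0 := by
    rcases lt_or_gt_of_ne hne with hlt | hgt
    · have h0 : v (L.take (t+1)).toFinset = 0 :=
        (h01 _).resolve_right (hmin t hlt)
      have h0' : v ((L.take (t + 1)).toFinset.erase (L.getD t default)) = 0 := by
        have hle := hmono _ _ (Finset.erase_subset (L.getD t default) (L.take (t+1)).toFinset)
        rcases h01 ((L.take (t + 1)).toFinset.erase (L.getD t default)) with h | h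
        · exact h
        · rw [h, h0] at hle; linarith
      rw [h0, h0']; ring
    · have ha : L.getD t default = L[t] := List.getD_eq_getElem L default ht
      have htake : L.take (t+1) = L.take t ++ [L[t]] := by
        rw [List.take_succ]
        simp [List.getElem?_eq_getElem ht]
      have hnodup : (L.take (t+1)).Nodup := hL.sublist (List.take_sublist _ _)
      have hanot : L[t] ∉ L.take t := by
        rw [htake] at hnodup
        have := List.disjoint_of_nodup_append hnodup
        intro hmem
        exact this hmem (List.mem_singleton_self _)
      have hsub : (L.take (p+1)).toFinset ⊆
          ((L.take (t + 1)).toFinset.erase (L.getD t default)) := by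
        rw [Finset.subset_erase]
        constructor
        · exact take_toFinset_subset L (by omega)
        · rw [ha]
          intro hmem
          rw [List.mem_toFinset] at hmem
          exact hanot (List.take_subset _ _ (by
            have : L.take (p+1) = (L.take t).take (p+1) := by
              rw [List.take_take, min_eq_left (by omega)]
            rwa [this] at hmem))
      have h1 : v ((L.take (t + 1)).toFinset.erase (L.getD t default)) = 1 := by
        have hle := hmono _ _ hsub
        rcases h01 ((L.take (t + 1)).toFinset.erase (L.getD t default)) with h | h
        · rw [h, hp1] at hle; linarith
        · exact h
      have h1' : v (L.take (t+1)).toFinset = 1 := by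
        have hle := hmono _ _ (take_toFinset_subset L (show p+1 ≤ t+1 by omega))
        rcases h01 ((L.take (t+1)).toFinset) with h | h
        · rw [h, hp1] at hle; linarith
        · exact h
      rw [h1, h1']; ring
  unfold ulmesStepL
  split
  · rw [key]; simp
  · rfl

lemma exists_pivot [Inhabited α] {v : Finset α → ℝ} {L : List α}
    (hne : L ≠ []) (hv1 : v L.toFinset = 1) :
    ∃ p, p < L.length ∧ v ((L.take (p+1)).toFinset) = 1 ∧
      (∀ s, s < p → v ((L.take (s+1)).toFinset) ≠ 1) := by
  have hlen : 0 < L.length := List.length_pos_iff.mpr hne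
  have hex : ∃ t, v ((L.take (t+1)).toFinset) = 1 := by
    refine ⟨L.length - 1, ?_⟩
    rw [show L.length - 1 + 1 = L.length by omega, List.take_length]
    exact hv1
  classical
  refine ⟨Nat.find hex, ?_, Nat.find_spec hex, fun s hs => Nat.find_min hex hs⟩
  have hle : Nat.find hex ≤ L.length - 1 := Nat.find_le (by
    rw [show L.length - 1 + 1 = L.length by omega, List.take_length]; exact hv1)
  omega

lemma total_eq_pivot [Inhabited α] {v : Finset α → ℝ}
    (h01 : ∀ S : Finset α, v S = 0 ∨ v S = 1)
    (hmono : ∀ S T : Finset α, S ⊆ T → v S ≤ v T)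
    {L : List α} (hL : L.Nodup) {p : ℕ} (hp : p < L.length)
    (hp1 : v ((L.take (p+1)).toFinset) = 1)
    (hmin : ∀ s, s < p → v ((L.take (s+1)).toFinset) ≠ 1) (x : α) :
    ulmesTotalL v L x = ulmesStepL v L p x := by
  unfold ulmesTotalL
  refine Finset.sum_eq_single_of_mem p (Finset.mem_range.2 hp) (fun b hb hbne => ?_)
  exact ulmesStepL_off_pivot h01 hmono hL (Finset.mem_range.1 hb) hp1 hmin hbne x

lemma pivot_unique {v : Finset α → ℝ} {L : List α} {p q : ℕ}
    (hp1 : v ((L.take (p+1)).toFinset) = 1)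
    (hpmin : ∀ s, s < p → v ((L.take (s+1)).toFinset) ≠ 1)
    (hq1 : v ((L.take (q+1)).toFinset) = 1)
    (hqmin : ∀ s, s < q → v ((L.take (s+1)).toFinset) ≠ 1) : p = q := by
  rcases lt_trichotomy p q with h | h | h
  · exact absurd hp1 (hqmin p h)
  · exact h
  · exact absurd hq1 (hpmin q h)

/-- In a simple online cooperative game (`0-1`-valued monotone normalized valuation with
`v N = 1`), ULMES satisfies incentive for early arrival: for any player `i`, if `L'` is
obtained from the arrival order `L` by delaying `i` (keeping the relative order of all
other players), then `i`'s total ULMES share under `L'` is at most her share under `L`. -/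
theorem ulmes_ea_simple [Fintype α] [Inhabited α]
    (v : Finset α → ℝ)
    (h01 : ∀ S : Finset α, v S = 0 ∨ v S = 1)
    (hnorm : v ∅ = 0) (hfull : v Finset.univ = 1)
    (hmono : ∀ S T : Finset α, S ⊆ T → v S ≤ v T)
    (L L' : List α) (hL : L.Nodup) (hL' : L'.Nodup)
    (hall : L.toFinset = Finset.univ) (hperm : L'.Perm L)
    (i : α) (hi : i ∈ L)
    (hothers : L.erase i = L'.erase i)
    (hdelay : L.idxOf i ≤ L'.idxOf i) :
    ulmesTotalL v L' i ≤ ulmesTotalL v L i := by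
  classical
  have hiL' : i ∈ L' := hperm.mem_iff.mpr hi
  set m := L.idxOf i with hmdef
  set m' := L'.idxOf i with hm'def
  have hm : m < L.length := List.idxOf_lt_length_iff.mpr hi
  have hm' : m' < L'.length := List.idxOf_lt_length_iff.mpr hiL'
  set A := L.take m with hA
  set B := L.drop (m+1) with hB
  set A' := L'.take m' with hA'
  set D := L'.drop (m'+1) with hD
  have hgetm : L[m] = i := List.getElem_idxOf hm
  have hgetm' : L'[m'] = i := List.getElem_idxOf hm'
  have hLd : L = A ++ i :: B := by
    conv_lhs => rw [← List.take_append_drop m L]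
    rw [List.drop_eq_getElem_cons hm, hgetm]
  have hL'd : L' = A' ++ i :: D := by
    conv_lhs => rw [← List.take_append_drop m' L']
    rw [List.drop_eq_getElem_cons hm', hgetm']
  have hLnodup : (A ++ i :: B).Nodup := hLd ▸ hL
  have hL'nodup : (A' ++ i :: D).Nodup := hL'd ▸ hL'
  have hiA : i ∉ A := fun h =>
    List.disjoint_of_nodup_append hLnodup h (List.mem_cons_self (a := i) (l := B))
  have hiA' : i ∉ A' := fun h =>
    List.disjoint_of_nodup_append hL'nodup h (List.mem_cons_self (a := i) (l := D))
  have hlenA : A.length = m := by rw [hA, List.length_take, min_eq_left hm.le]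
  have hlenA' : A'.length = m' := by rw [hA', List.length_take, min_eq_left hm'.le]
  have hAB : A ++ B = A' ++ D := by
    have e1 : L.erase i = A ++ B := by
      rw [hLd, List.erase_append_right _ hiA, List.erase_cons_head]
    have e2 : L'.erase i = A' ++ D := by
      rw [hL'd, List.erase_append_right _ hiA', List.erase_cons_head]
    rw [← e1, ← e2, hothers]
  set C := A'.drop m with hC
  have hAeq : A'.take m = A := by
    have h1 : (A ++ B).take m = A := List.take_left' hlenA
    have h2 : (A' ++ D).take m = A'.take m :=
      List.take_append_of_le_length (by omega)
    rw [← h2, ← hAB, h1]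
  have hA'eq : A' = A ++ C := by
    rw [← hAeq, hC]; exact (List.take_append_drop m A').symm
  have hBeq : B = C ++ D := by
    have h1 := congrArg (List.drop m) hAB
    rw [List.drop_append_of_le_length (by omega),
        List.drop_append_of_le_length (by omega)] at h1
    rw [show A.drop m = [] from by
      rw [List.drop_eq_nil_iff]; omega] at h1
    simpa [hC] using h1
  have hlenC : C.length = m' - m := by rw [hC, List.length_drop, hlenA']
  have hiC : i ∉ C := fun h => hiA' (hA'eq ▸ List.mem_append_right A h)
  -- prefix computations
  have htakeL : ∀ j, L.take (m + 1 + (C.length + j)) = A ++ i :: (C ++ D.take j) := by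
    intro j
    conv_lhs => rw [hLd, hBeq]
    rw [show m + 1 + (C.length + j) = A.length + (1 + (C.length + j)) by omega]
    rw [List.take_length_add_append]
    congr 1
    rw [show 1 + (C.length + j) = (C.length + j) + 1 by omega, List.take_succ_cons]
    congr 1
    exact List.take_length_add_append j
  have htakeL' : ∀ j, L'.take (m' + 1 + j) = A' ++ i :: D.take j := by
    intro j
    conv_lhs => rw [hL'd]
    rw [show m' + 1 + j = A'.length + (1 + j) by omega]
    rw [List.take_length_add_append]
    congr 1
    rw [show 1 + j = j + 1 by omega, List.take_succ_cons]
  -- pivots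
  have hLne : L ≠ [] := List.ne_nil_of_mem hi
  have hL'ne : L' ≠ [] := List.ne_nil_of_mem hiL'
  have hv1L : v L.toFinset = 1 := by rw [hall]; exact hfull
  have hv1L' : v L'.toFinset = 1 := by
    have : L'.toFinset = L.toFinset := by ext x; simp [hperm.mem_iff]
    rw [this]; exact hv1L
  obtain ⟨p, hpL, hp1, hpmin⟩ := exists_pivot hLne hv1L
  obtain ⟨p', hpL', hp1', hpmin'⟩ := exists_pivot hL'ne hv1L'
  rw [total_eq_pivot h01 hmono hL hpL hp1 hpmin i,
      total_eq_pivot h01 hmono hL' hpL' hp1' hpmin' i]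
  have hstepnn : 0 ≤ ulmesStepL v L p i := ulmesStepL_nonneg hmono L p i
  rcases lt_trichotomy p' m' with hcase | hcase | hcase
  · -- pivot in L' strictly before i arrives: i gets 0 in L'
    have hnot : i ∉ ulmesSetL v L' p' := by
      intro hmem
      have h1 : i ∈ (L'.take (p'+1)).toFinset := ulmesScan_subset _ _ _ _ _ hmem
      rw [List.mem_toFinset] at h1
      have h2 : L'.take (p'+1) = A'.take (p'+1) := by
        rw [hA', List.take_take, min_eq_left (by omega)]
      rw [h2] at h1
      exact hiA' (List.take_subset _ _ h1)
    unfold ulmesStepL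
    rw [if_neg hnot]
    exact hstepnn
  · -- pivot in L' exactly at i's arrival: i is the arriver, removed by the scan
    subst hcase
    have hnot : i ∉ ulmesSetL v L' m' := by
      unfold ulmesSetL
      have hga : L'.getD m' default = i := by
        rw [List.getD_eq_getElem L' default hm', hgetm']
      have htk : L'.take (m' + 1) = A' ++ [i] := by
        have := htakeL' 0
        simpa using this
      rw [hga, htk]
      rw [show (A' ++ [i]).reverse = i :: A'.reverse by simp]
      rw [ulmesScan]
      have hiF : i ∈ (A' ++ [i]).toFinset := by simp
      rw [if_pos (by rw [Finset.insert_erase hiF])]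
      intro hmem
      exact (Finset.notMem_erase i _) (ulmesScan_subset _ _ _ _ _ hmem)
    unfold ulmesStepL
    rw [if_neg hnot]
    exact hstepnn
  · -- pivot in L' strictly after i arrives
    set k := p' - (m' + 1) with hk
    have hp'eq : p' = m' + 1 + k := by omega
    have hlist' : L'.take (p'+1) = A' ++ i :: D.take (k+1) := by
      rw [show p' + 1 = m' + 1 + (k+1) by omega]; exact htakeL' (k+1)
    have hlistL : L.take (p'+1) = A ++ i :: (C ++ D.take (k+1)) := by
      rw [show p' + 1 = m + 1 + (C.length + (k+1)) by omega]; exact htakeL (k+1)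
    have hlistLp : L.take p' = A ++ i :: (C ++ D.take k) := by
      rw [show p' = m + 1 + (C.length + k) by omega]; exact htakeL k
    have hlist'p : L'.take p' = A' ++ i :: D.take k := by
      rw [show p' = m' + 1 + k by omega]; exact htakeL' k
    have hFeq : (L.take (p'+1)).toFinset = (L'.take (p'+1)).toFinset := by
      rw [hlistL, hlist', hA'eq]
      ext x
      simp only [List.toFinset_append, List.toFinset_cons, Finset.mem_union,
        Finset.mem_insert, List.mem_toFinset]
      tauto
    have hFeqp : (L.take p').toFinset = (L'.take p').toFinset := by
      rw [hlistLp, hlist'p, hA'eq]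
      ext x
      simp only [List.toFinset_append, List.toFinset_cons, Finset.mem_union,
        Finset.mem_insert, List.mem_toFinset]
      tauto
    -- the pivot of L is also at position p'
    have hp1L : v ((L.take (p'+1)).toFinset) = 1 := by rw [hFeq]; exact hp1'
    have hminL : ∀ s, s < p' → v ((L.take (s+1)).toFinset) ≠ 1 := by
      intro s hs
      have h0 : v ((L'.take p').toFinset) = 0 := by
        have := hpmin' (p' - 1) (by omega)
        rw [show p' - 1 + 1 = p' by omega] at this
        exact (h01 _).resolve_right this
      have hsub : (L.take (s+1)).toFinset ⊆ (L.take p').toFinset :=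
        take_toFinset_subset L (by omega)
      have hle := hmono _ _ hsub
      rw [hFeqp, h0] at hle
      intro h1
      rw [h1] at hle
      linarith
    have hpp : p = p' := pivot_unique hp1 hpmin hp1L hminL
    subst hpp
    -- the arrivers coincide
    have hkD : k < D.length := by
      have : L'.length = A'.length + (1 + D.length) := by
        rw [hL'd]; simp [List.length_append]; omega
      omega
    have haL' : L'.getD p default = D[k] := by
      rw [List.getD_eq_getElem L' default hpL']
      rw [List.getElem_of_eq hL'd hpL']
      rw [List.getElem_append_right (by omega)]
      simp [show p - A'.length = k + 1 from by omega]
    have haL : L.getD p default = D[k] := by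
      rw [List.getD_eq_getElem L default hpL]
      rw [List.getElem_of_eq (hBeq ▸ hLd : L = A ++ i :: (C ++ D)) hpL]
      rw [List.getElem_append_right (by omega)]
      simp only [show p - A.length = C.length + k + 1 from by omega, List.getElem_cons_succ]
      rw [List.getElem_append_right (by omega)]
      simp [show C.length + k - C.length = k from by omega]
    by_cases hmem : i ∈ ulmesSetL v L' p
    · -- equal sharing sets, equal steps
      have hrev' : (L'.take (p+1)).reverse
          = (D.take (k+1)).reverse ++ i :: (C.reverse ++ A.reverse) := by
        rw [hlist', hA'eq]
        simp [List.reverse_append, List.reverse_cons]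
      have hrevL : (L.take (p+1)).reverse
          = ((D.take (k+1)).reverse ++ C.reverse) ++ i :: A.reverse := by
        rw [hlistL]
        simp [List.reverse_append, List.reverse_cons]
      have hiCrev : i ∉ C.reverse := fun h => hiC (List.mem_reverse.mp h)
      have hseteq : ulmesSetL v L p = ulmesSetL v L' p := by
        unfold ulmesSetL at hmem ⊢
        rw [hFeq, haL, haL', hrevL, hrev']
        rw [hrev', haL'] at hmem
        exact (ulmesScan_swap h01 hmono hp1' _ _ _ _ hiCrev hmem).symm
      unfold ulmesStepL
      rw [hseteq, hFeq, haL, haL']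
    · unfold ulmesStepL
      rw [if_neg hmem]
      exact hstepnn
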